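/- Let α be a positive integer, 0 < p = 1 - q < 1, and z > 1. Then h₁(1) = ∑_{j=1}^{α} [(α-1)!/((α-j)! j!)]·(p/q)^{j-1}·(j-z)^+ ≤ (α-1) p q^{1-α} / z, and h₂(1) = ∑_{j=1}^{α} [(α-1)!/((α-j)! j!)]·(p/q)^{j-1}·E[(B_{α,p}-z)^+] ≤ (α-1) p q^{1-α} / z. -/

import Mathlib

open Finset

/-- `E[(B_{α,p} - z)^+]`, the expected call function of a binomial random variable
`B_{α,p}` with `P(B = j) = C(α,j) p^j (1-p)^{α-j}` for `j = 0,…,α`. -/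
noncomputable def binomCallExp (α : ℕ) (p z : ℝ) : ℝ :=
  ∑ j ∈ Finset.range (α + 1),
    (α.choose j : ℝ) * p ^ j * (1 - p) ^ (α - j) * max ((j : ℝ) - z) 0

/-- `h₁(k) = ∑_{j=k}^{α} [(α-k)!/(α-j)!]·[(k-1)!/j!]·(p/q)^{j-k}·(j-z)^+` with `q = 1 - p`. -/
noncomputable def h1 (α : ℕ) (p z : ℝ) (k : ℕ) : ℝ :=
  ∑ j ∈ Finset.Icc k α,
    ((α - k).factorial : ℝ) / ((α - j).factorial : ℝ) *
      (((k - 1).factorial : ℝ) / (j.factorial : ℝ)) *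
        (p / (1 - p)) ^ (j - k) * max ((j : ℝ) - z) 0

/-- `h₂(k) = ∑_{j=k}^{α} [(α-k)!/(α-j)!]·[(k-1)!/j!]·(p/q)^{j-k}·E[(B_{α,p}-z)^+]`
with `q = 1 - p`. -/
noncomputable def h2 (α : ℕ) (p z : ℝ) (k : ℕ) : ℝ :=
  ∑ j ∈ Finset.Icc k α,
    ((α - k).factorial : ℝ) / ((α - j).factorial : ℝ) *
      (((k - 1).factorial : ℝ) / (j.factorial : ℝ)) *
        (p / (1 - p)) ^ (j - k) * binomCallExp α p z

/-- The solution `g_z` of the binomial Stein equation: `g_z(0) = 0`,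
`g_z(k) = -∑_{j=k}^{α} [(α-k)!/(α-j)!]·[(k-1)!/j!]·(p/q)^{j-k}·[(j-z)^+ - E(B_{α,p}-z)^+]`
for `1 ≤ k ≤ α`, extended by `g_z(k) = 0` for `k > α` (in particular `g_z(α+1) = 0`). -/
noncomputable def steinSol (α : ℕ) (p z : ℝ) (k : ℕ) : ℝ :=
  if k = 0 ∨ α < k then 0
  else
    -∑ j ∈ Finset.Icc k α,
      ((α - k).factorial : ℝ) / ((α - j).factorial : ℝ) *
        (((k - 1).factorial : ℝ) / (j.factorial : ℝ)) *
          (p / (1 - p)) ^ (j - k) * (max ((j : ℝ) - z) 0 - binomCallExp α p z)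

/-- For `z > 1`,
`h₁(1) = ∑_{j=1}^{α} [(α-1)!/((α-j)! j!)]·(p/q)^{j-1}·(j-z)^+ ≤ (α-1) p q^{1-α} / z` and
`h₂(1) = ∑_{j=1}^{α} [(α-1)!/((α-j)! j!)]·(p/q)^{j-1}·E[(B_{α,p}-z)^+] ≤ (α-1) p q^{1-α} / z`. -/
private lemma maxle' {z : ℝ} (hz : 1 < z) (j : ℕ) :
    max ((j : ℝ) - z) 0 ≤ (j : ℝ) * ((j : ℝ) - 1) / z := by
  have hz0 : (0:ℝ) < z := by linarith
  have hjj : 0 ≤ (j:ℝ) * ((j:ℝ) - 1) := by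
    rcases Nat.eq_zero_or_pos j with h0 | h0
    · simp [h0]
    · have : (1:ℝ) ≤ j := by exact_mod_cast h0
      nlinarith
  rcases le_or_gt ((j:ℝ)) z with h | h
  · rw [max_eq_right (by linarith)]
    exact div_nonneg hjj hz0.le
  · rw [max_eq_left (by linarith)]
    rw [le_div_iff₀ hz0]
    nlinarith [sq_nonneg ((j:ℝ) - z)]

private lemma chooseJJ (β i : ℕ) :
    (((β+2).choose (i+2) : ℝ)) * ((i+2) * (i+1)) = (β+2) * (β+1) * (β.choose i) := by
  have h1 := Nat.add_one_mul_choose_eq (β+1) (i+1)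
  have h2 := Nat.add_one_mul_choose_eq β i
  have h1' : ((β:ℝ)+2) * ((β+1).choose (i+1)) = ((β+2).choose (i+2)) * ((i:ℝ)+2) := by
    exact_mod_cast congrArg (Nat.cast (R := ℝ)) h1
  have h2' : ((β:ℝ)+1) * (β.choose i) = ((β+1).choose (i+1)) * ((i:ℝ)+1) := by
    exact_mod_cast congrArg (Nat.cast (R := ℝ)) h2
  nlinarith [h1', h2']

private lemma sumJJ (α : ℕ) (p q : ℝ) (hpq : p + q = 1) :
    ∑ j ∈ Finset.range (α+1),
        (α.choose j : ℝ) * p ^ j * q ^ (α - j) * ((j:ℝ) * ((j:ℝ) - 1))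
      = (α:ℝ) * ((α:ℝ) - 1) * p ^ 2 := by
  match α with
  | 0 => norm_num
  | 1 => norm_num [Finset.sum_range_succ]
  | (β+2) =>
    have hb : ∑ i ∈ Finset.range (β+1), (β.choose i : ℝ) * p ^ i * q ^ (β - i) = 1 := by
      have h := add_pow p q β
      rw [hpq, one_pow] at h
      rw [Finset.sum_congr rfl (fun i _ => by ring :
        ∀ i ∈ Finset.range (β+1), (β.choose i : ℝ) * p ^ i * q ^ (β - i)
          = p ^ i * q ^ (β - i) * (β.choose i : ℝ))]
      exact h.symm
    have e1 : β + 2 + 1 = (β + 2) + 1 := rfl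
    rw [e1, Finset.sum_range_succ']
    have e2 : β + 2 = (β + 1) + 1 := rfl
    rw [e2, Finset.sum_range_succ']
    norm_num
    trans ((β:ℝ)+2) * ((β:ℝ)+1) * p^2 *
        ∑ i ∈ Finset.range (β+1), (β.choose i : ℝ) * p ^ i * q ^ (β - i)
    · rw [Finset.mul_sum]
      refine Finset.sum_congr rfl fun i hi => ?_
      have hc := chooseJJ β i
      have hsub : β + 2 - (i + 1 + 1) = β - i := by omega
      rw [hsub]
      push_cast at hc ⊢
      linear_combination (p ^ (i + 1 + 1) * q ^ (β - i)) * hc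
    · rw [hb]; push_cast; ring

private lemma convAB (α j : ℕ) (hj1 : 1 ≤ j) (hjα : j ≤ α) (p q : ℝ) (hqne : q ≠ 0) :
    ((α:ℝ) * p * q ^ (α-1)) *
      (((α-1).factorial : ℝ) / ((α-j).factorial : ℝ) * (1 / (j.factorial : ℝ)) *
        (p / q) ^ (j-1))
      = (α.choose j : ℝ) * p ^ j * q ^ (α - j) := by
  have hα : 1 ≤ α := le_trans hj1 hjα
  rw [Nat.cast_choose ℝ hjα]
  have hfα : (α.factorial : ℝ) = α * (α-1).factorial := by
    exact_mod_cast congrArg (Nat.cast (R := ℝ)) (Nat.mul_factorial_pred (by omega)).symm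
  have hpj : p ^ j = p * p ^ (j-1) := by
    rw [← pow_succ']; congr 1; omega
  have hq1 : q ^ (α-1) = q ^ (α-j) * q ^ (j-1) := by
    rw [← pow_add]; congr 1; omega
  rw [div_pow, hfα, hpj, hq1]
  have h1 : ((α-1).factorial : ℝ) ≠ 0 := Nat.cast_ne_zero.mpr (Nat.factorial_ne_zero _)
  have h2 : ((α-j).factorial : ℝ) ≠ 0 := Nat.cast_ne_zero.mpr (Nat.factorial_ne_zero _)
  have h3 : ((j).factorial : ℝ) ≠ 0 := Nat.cast_ne_zero.mpr (Nat.factorial_ne_zero _)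
  have h4 : q ^ (j-1) ≠ 0 := pow_ne_zero _ hqne
  field_simp

private lemma sumOne (α : ℕ) (p q : ℝ) (hpq : p + q = 1) :
    ∑ j ∈ Finset.Icc 1 α, (α.choose j : ℝ) * p ^ j * q ^ (α - j) = 1 - q ^ α := by
  have h := add_pow p q α
  rw [hpq, one_pow] at h
  have hpeel : ∑ j ∈ Finset.range (α+1), p ^ j * q ^ (α - j) * (α.choose j : ℝ)
      = (∑ i ∈ Finset.range α, p ^ (i+1) * q ^ (α - (i+1)) * (α.choose (i+1) : ℝ))
        + p ^ 0 * q ^ (α - 0) * (α.choose 0 : ℝ) := Finset.sum_range_succ' _ _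
  have hIcc : ∑ j ∈ Finset.Icc 1 α, (α.choose j : ℝ) * p ^ j * q ^ (α - j)
      = ∑ i ∈ Finset.range α, p ^ (i+1) * q ^ (α - (i+1)) * (α.choose (i+1) : ℝ) := by
    rw [← Finset.Ico_add_one_right_eq_Icc, Finset.sum_Ico_eq_sum_range]
    rw [show α + 1 - 1 = α from rfl]
    exact Finset.sum_congr rfl fun i _ => by rw [add_comm 1 i]; ring
  rw [hIcc]
  have h2 := h.trans hpeel
  simp only [pow_zero, Nat.sub_zero, Nat.choose_zero_right, Nat.cast_one, one_mul, mul_one] at h2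
  linarith

theorem h1_h2_one_le (α : ℕ) (hα : 0 < α) (p q : ℝ)
    (hq : q = 1 - p) (hp : 0 < p) (hp1 : p < 1) (z : ℝ) (hz : 1 < z) :
    h1 α p z 1 ≤ ((α : ℝ) - 1) * p * q ^ ((1 : ℤ) - (α : ℤ)) / z ∧
      h2 α p z 1 ≤ ((α : ℝ) - 1) * p * q ^ ((1 : ℤ) - (α : ℤ)) / z := by
  have hq0 : 0 < q := by rw [hq]; linarith
  have hqne : q ≠ 0 := ne_of_gt hq0
  have hz0 : (0:ℝ) < z := lt_trans one_pos hz
  have hpq : p + q = 1 := by rw [hq]; ring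
  have hα1 : (1:ℝ) ≤ (α:ℝ) := by exact_mod_cast hα
  have hzp : q ^ ((1:ℤ)-(α:ℤ)) = (q ^ (α-1))⁻¹ := by
    rw [show (1:ℤ)-(α:ℤ) = -(((α-1:ℕ)):ℤ) by omega, zpow_neg, zpow_natCast]
  set f : ℕ → ℝ := fun j =>
    ((α-1).factorial : ℝ) / ((α-j).factorial : ℝ) * (1 / (j.factorial : ℝ)) *
      (p/q) ^ (j-1) with hfdef
  have hh1 : h1 α p z 1 = ∑ j ∈ Finset.Icc 1 α, f j * max ((j:ℝ) - z) 0 := by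
    simp only [h1, ← hq, Nat.sub_self, Nat.factorial_zero, Nat.cast_one, hfdef]
  have hf0 : ∀ j ∈ Finset.Icc 1 α, 0 ≤ f j := by
    intro j _
    exact mul_nonneg (mul_nonneg (div_nonneg (Nat.cast_nonneg _) (Nat.cast_nonneg _))
      (div_nonneg zero_le_one (Nat.cast_nonneg _))) (pow_nonneg (div_nonneg hp.le hq0.le) _)
  set A := (α:ℝ) * p * q ^ (α-1) with hAdef
  have hA : 0 < A := mul_pos (mul_pos (by linarith) hp) (pow_pos hq0 _)
  have hconv : ∀ j ∈ Finset.Icc 1 α, A * f j = (α.choose j : ℝ) * p^j * q^(α-j) := by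
    intro j hj
    rw [Finset.mem_Icc] at hj
    exact convAB α j hj.1 hj.2 p q hqne
  have hJJIcc : ∑ j ∈ Finset.Icc 1 α, (α.choose j : ℝ) * p^j * q^(α-j) * ((j:ℝ)*((j:ℝ)-1))
      = (α:ℝ)*((α:ℝ)-1)*p^2 := by
    rw [← sumJJ α p q hpq, Finset.sum_range_succ']
    rw [← Finset.Ico_add_one_right_eq_Icc, Finset.sum_Ico_eq_sum_range, show α + 1 - 1 = α from rfl]
    simp only [Nat.cast_zero, zero_mul, mul_zero, add_zero]
    exact Finset.sum_congr rfl fun i _ => by rw [add_comm 1 i]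
  have hU : ∑ j ∈ Finset.Icc 1 α, f j * ((j:ℝ)*((j:ℝ)-1))
      = ((α:ℝ)-1)*p*q^((1:ℤ)-(α:ℤ)) := by
    apply mul_left_cancel₀ (ne_of_gt hA)
    rw [Finset.mul_sum]
    trans ∑ j ∈ Finset.Icc 1 α, (α.choose j : ℝ) * p^j * q^(α-j) * ((j:ℝ)*((j:ℝ)-1))
    · refine Finset.sum_congr rfl fun j hj => ?_
      rw [← mul_assoc, hconv j hj]
    · rw [hJJIcc, hzp, hAdef]
      field_simp
  have part1 : h1 α p z 1 ≤ ((α:ℝ)-1)*p*q^((1:ℤ)-(α:ℤ)) / z := by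
    rw [hh1]
    calc ∑ j ∈ Finset.Icc 1 α, f j * max ((j:ℝ)-z) 0
        ≤ ∑ j ∈ Finset.Icc 1 α, f j * ((j:ℝ)*((j:ℝ)-1)/z) :=
          Finset.sum_le_sum fun j hj => mul_le_mul_of_nonneg_left (maxle' hz j) (hf0 j hj)
      _ = (∑ j ∈ Finset.Icc 1 α, f j * ((j:ℝ)*((j:ℝ)-1))) / z := by
          rw [Finset.sum_div]
          exact Finset.sum_congr rfl fun j _ => by ring
      _ = _ := by rw [hU]
  have hS : A * (∑ j ∈ Finset.Icc 1 α, f j) = 1 - q^α := by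
    rw [Finset.mul_sum, ← sumOne α p q hpq]
    exact Finset.sum_congr rfl hconv
  have hS0 : 0 ≤ ∑ j ∈ Finset.Icc 1 α, f j := Finset.sum_nonneg hf0
  have hE : binomCallExp α p z ≤ (α:ℝ)*((α:ℝ)-1)*p^2 / z := by
    unfold binomCallExp
    simp only [show (1:ℝ) - p = q from hq.symm]
    calc ∑ j ∈ Finset.range (α+1), (α.choose j:ℝ)*p^j*q^(α-j) * max ((j:ℝ)-z) 0
        ≤ ∑ j ∈ Finset.range (α+1), (α.choose j:ℝ)*p^j*q^(α-j) * ((j:ℝ)*((j:ℝ)-1)/z) :=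
          Finset.sum_le_sum fun j _ => mul_le_mul_of_nonneg_left (maxle' hz j)
            (mul_nonneg (mul_nonneg (Nat.cast_nonneg _) (pow_nonneg hp.le _))
              (pow_nonneg hq0.le _))
      _ = (∑ j ∈ Finset.range (α+1), (α.choose j:ℝ)*p^j*q^(α-j)*((j:ℝ)*((j:ℝ)-1)))/z := by
          rw [Finset.sum_div]
          exact Finset.sum_congr rfl fun j _ => by ring
      _ = _ := by rw [sumJJ α p q hpq]
  have hh2 : h2 α p z 1 = (∑ j ∈ Finset.Icc 1 α, f j) * binomCallExp α p z := by
    simp only [h2, ← hq, Nat.sub_self, Nat.factorial_zero, Nat.cast_one, hfdef]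
    rw [← Finset.sum_mul]
  have hR0 : 0 ≤ ((α:ℝ)-1)*p*q^((1:ℤ)-(α:ℤ))/z := by
    rw [hzp]
    have h9 : (0:ℝ) ≤ (q ^ (α-1))⁻¹ := by positivity
    exact div_nonneg (mul_nonneg (mul_nonneg (by linarith) hp.le) h9) hz0.le
  have part2 : h2 α p z 1 ≤ ((α:ℝ)-1)*p*q^((1:ℤ)-(α:ℤ)) / z := by
    rw [hh2]
    calc (∑ j ∈ Finset.Icc 1 α, f j) * binomCallExp α p z
        ≤ (∑ j ∈ Finset.Icc 1 α, f j) * ((α:ℝ)*((α:ℝ)-1)*p^2/z) :=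
          mul_le_mul_of_nonneg_left hE hS0
      _ = (A * ∑ j ∈ Finset.Icc 1 α, f j) * (((α:ℝ)-1)*p*q^((1:ℤ)-(α:ℤ))/z) := by
          rw [hzp, hAdef]
          field_simp
      _ ≤ 1 * (((α:ℝ)-1)*p*q^((1:ℤ)-(α:ℤ))/z) := by
          refine mul_le_mul_of_nonneg_right ?_ hR0
          rw [hS]
          nlinarith [pow_nonneg hq0.le α]
      _ = _ := one_mul _
  exact ⟨part1, part2⟩
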